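/- arXiv:1907.02754 — 3 statements merged into one kernel-verified Lean document; each statement's English description precedes it below -/
import Mathlib

section
/- Let A be a commutative ring, M a flat A-module, and F a finite free A-module of rank n with an A-linear map φ: F → M. Suppose A is local with maximal ideal m and residue field k, and the induced map F ⊗ k → M ⊗ k is injective. Then for every prime ideal p of A, the induced map F ⊗ k(p) → M ⊗ k(p) is injective, where k(p) is the residue field at p. -/
open TensorProduct

/-- An element `1 ⊗ w` in `S ⊗[A] (ι → A)` vanishes iff all coordinates of `w`
map to zero in `S`. -/
lemma aux_one_tmul_pi_eq_zero {A : Type} [CommRing A] (S : Type) [CommRing S] [Algebra A S]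
    {ι : Type} [Fintype ι] [DecidableEq ι] (w : ι → A) :
    (1 : S) ⊗ₜ[A] w = (0 : S ⊗[A] (ι → A)) ↔ ∀ i, algebraMap A S (w i) = 0 := by
  have key : (1 : S) ⊗ₜ[A] w
      = ((Pi.basisFun A ι).baseChange S).equivFun.symm (fun i => algebraMap A S (w i)) := by
    rw [Module.Basis.equivFun_symm_apply]
    have : ∀ i : ι, algebraMap A S (w i) • ((Pi.basisFun A ι).baseChange S i)
        = (1 : S) ⊗ₜ[A] (Pi.single i (w i) : ι → A) := by
      intro i
      rw [Module.Basis.baseChange_apply, Pi.basisFun_apply, Algebra.algebraMap_eq_smul_one,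
        TensorProduct.smul_tmul', smul_eq_mul, mul_one, TensorProduct.smul_tmul,
        ← Pi.single_smul, smul_eq_mul, mul_one]
    rw [Finset.sum_congr rfl (fun i _ => this i), ← TensorProduct.tmul_sum,
      Finset.univ_sum_single]
  rw [key, LinearEquiv.map_eq_zero_iff, funext_iff]
  simp

/-- If `algebraMap A S` is surjective, every element of `S ⊗[A] N` is of the form `1 ⊗ v`. -/
lemma aux_exists_one_tmul {A : Type} [CommRing A] {S : Type} [CommRing S] [Algebra A S]
    (hsurj : Function.Surjective (algebraMap A S))
    {N : Type} [AddCommGroup N] [Module A N] (x : S ⊗[A] N) :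
    ∃ v : N, x = (1 : S) ⊗ₜ[A] v := by
  induction x using TensorProduct.induction_on with
  | zero => exact ⟨0, by simp⟩
  | tmul c f =>
    obtain ⟨a, rfl⟩ := hsurj c
    exact ⟨a • f, by rw [← TensorProduct.smul_tmul, Algebra.algebraMap_eq_smul_one]⟩
  | add x y hx hy =>
    obtain ⟨v, rfl⟩ := hx
    obtain ⟨w, rfl⟩ := hy
    exact ⟨v + w, by rw [TensorProduct.tmul_add]⟩

/-- Every element of `k(p) ⊗[A] N` becomes of the form `1 ⊗ v` after scaling by
(the image of) some `s ∉ p`. -/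
lemma aux_exists_smul_eq_one_tmul {A : Type} [CommRing A] (p : Ideal A) [p.IsPrime]
    {N : Type} [AddCommGroup N] [Module A N]
    (x : IsLocalRing.ResidueField (Localization.AtPrime p) ⊗[A] N) :
    ∃ s ∈ p.primeCompl, ∃ v : N,
      algebraMap A (IsLocalRing.ResidueField (Localization.AtPrime p)) s • x
        = (1 : IsLocalRing.ResidueField (Localization.AtPrime p)) ⊗ₜ[A] v := by
  set R := Localization.AtPrime p
  set K := IsLocalRing.ResidueField R
  induction x using TensorProduct.induction_on with
  | zero => exact ⟨1, one_mem _, 0, by simp⟩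
  | tmul c f =>
    obtain ⟨r, rfl⟩ := IsLocalRing.residue_surjective (R := R) c
    obtain ⟨a, s, hmk⟩ := IsLocalization.exists_mk'_eq p.primeCompl r
    refine ⟨s, s.2, a • f, ?_⟩
    rw [TensorProduct.smul_tmul', smul_eq_mul]
    have : algebraMap A K (s : A) * IsLocalRing.residue R r = algebraMap A K a := by
      rw [IsScalarTower.algebraMap_apply A R K, IsScalarTower.algebraMap_apply A R K]
      show IsLocalRing.residue R _ * IsLocalRing.residue R r = IsLocalRing.residue R _
      rw [← map_mul, ← hmk, mul_comm, IsLocalization.mk'_spec]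
    rw [this, Algebra.algebraMap_eq_smul_one, TensorProduct.smul_tmul]
  | add x y hx hy =>
    obtain ⟨s, hs, v, hv⟩ := hx
    obtain ⟨t, ht, w, hw⟩ := hy
    refine ⟨s * t, mul_mem hs ht, t • v + s • w, ?_⟩
    have e1 : algebraMap A K (s * t) • x = (1 : K) ⊗ₜ[A] (t • v) := by
      rw [mul_comm, map_mul, mul_smul, hv, algebraMap_smul, TensorProduct.tmul_smul]
    have e2 : algebraMap A K (s * t) • y = (1 : K) ⊗ₜ[A] (s • w) := by
      rw [map_mul, mul_smul, hw, algebraMap_smul, TensorProduct.tmul_smul]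
    rw [smul_add, e1, e2, ← TensorProduct.tmul_add]

set_option maxHeartbeats 1000000 in
/-- Let `A` be a commutative local ring, `M` a flat `A`-module and
`φ : A^n → M` a linear map from a finite free module.  If the induced map
`A^n ⊗ k → M ⊗ k` is injective for the residue field `k` of `A`, then for every
prime `p` of `A` the induced map `A^n ⊗ k(p) → M ⊗ k(p)` is injective, where
`k(p)` is the residue field at `p`. -/
theorem stmt0 {A : Type} [CommRing A] [IsLocalRing A]
    (M : Type) [AddCommGroup M] [Module A M] [Module.Flat A M]
    (n : ℕ) (φ : (Fin n → A) →ₗ[A] M)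
    (h : Function.Injective (LinearMap.baseChange (IsLocalRing.ResidueField A) φ))
    (p : Ideal A) [p.IsPrime] :
    Function.Injective
      (LinearMap.baseChange (IsLocalRing.ResidueField (Localization.AtPrime p)) φ) := by
  classical
  set R := Localization.AtPrime p with hR
  set K := IsLocalRing.ResidueField R with hK
  set k := IsLocalRing.ResidueField A with hk
  set m : Fin n → M := fun i => φ (Pi.single i 1) with hm
  -- every vector is the sum of its coordinates times basis vectors
  have hφv : ∀ u : Fin n → A, φ u = ∑ i, u i • m i := by
    intro u
    conv_lhs => rw [← Finset.univ_sum_single u]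
    rw [map_sum]
    refine Finset.sum_congr rfl fun i _ => ?_
    have : (Pi.single i (u i) : Fin n → A) = u i • (Pi.single i (1 : A) : Fin n → A) := by
      rw [← Pi.single_smul, smul_eq_mul, mul_one]
    rw [this, map_smul]
  rw [injective_iff_map_eq_zero]
  intro x hx
  obtain ⟨s, hs, v, hsv⟩ := aux_exists_smul_eq_one_tmul p x
  -- the image of `v` vanishes in `K ⊗ M`
  have h1 : (1 : K) ⊗ₜ[A] (φ v) = 0 := by
    calc (1 : K) ⊗ₜ[A] (φ v) = LinearMap.baseChange K φ ((1 : K) ⊗ₜ[A] v) := by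
          rw [LinearMap.baseChange_tmul]
      _ = LinearMap.baseChange K φ (algebraMap A K s • x) := by rw [hsv]
      _ = algebraMap A K s • LinearMap.baseChange K φ x := by rw [map_smul]
      _ = 0 := by rw [hx, smul_zero]
  -- it suffices to prove that all coordinates of `v` lie in `p`
  suffices hv : ∀ i, v i ∈ p by
    have hv0 : (1 : K) ⊗ₜ[A] v = 0 := by
      rw [aux_one_tmul_pi_eq_zero]
      intro i
      rw [IsScalarTower.algebraMap_apply A R K]
      show IsLocalRing.residue R _ = 0
      rw [IsLocalRing.residue_eq_zero_iff]
      rw [← Localization.AtPrime.comap_maximalIdeal (I := p)] at hv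
      exact hv i
    have hu : IsUnit (algebraMap A K s) := by
      rw [IsScalarTower.algebraMap_apply A R K]
      exact (IsLocalization.map_units R ⟨s, hs⟩).map (IsLocalRing.residue R)
    have : algebraMap A K s • x = algebraMap A K s • (0 : K ⊗[A] (Fin n → A)) := by
      rw [hsv, hv0, smul_zero]
    exact hu.smul_left_cancel.mp this
  -- the vanishing expression `∑ c i ⊗ m i = 0` in `K ⊗ M`
  set c : Fin n → K := fun i => algebraMap A K (v i) with hc
  have hsum : ∑ i, c i ⊗ₜ[A] m i = (0 : K ⊗[A] M) := by
    have e : ∀ i : Fin n, c i ⊗ₜ[A] m i = (1 : K) ⊗ₜ[A] (v i • m i) := by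
      intro i
      show (algebraMap A K (v i)) ⊗ₜ[A] m i = (1 : K) ⊗ₜ[A] (v i • m i)
      rw [TensorProduct.tmul_smul, ← algebraMap_smul K (v i) ((1 : K) ⊗ₜ[A] m i),
        TensorProduct.smul_tmul', smul_eq_mul, mul_one]
    rw [Finset.sum_congr rfl (fun i _ => e i), ← TensorProduct.tmul_sum, ← hφv, h1]
  obtain ⟨κ, a, y, hy, ha⟩ :=
    TensorProduct.vanishesTrivially_of_sum_tmul_eq_zero_of_rTensor_injective A
      (Module.Flat.rTensor_preserves_injective_linearMap _ (Submodule.injective_subtype _)) hsum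
  -- the matrix β
  set β : (Fin n → A) →ₗ[A] (Fin κ → A) :=
    LinearMap.pi (fun j => ∑ i, a i j • LinearMap.proj i) with hβdef
  have hβ : ∀ (u : Fin n → A) (j : Fin κ), β u j = ∑ i, a i j * u i := by
    intro u j
    simp [hβdef, mul_comm]
  -- decomposition of φ through β and y
  have hφβ : ∀ u : Fin n → A, φ u = ∑ j, (β u j) • y j := by
    intro u
    rw [hφv u]
    calc ∑ i, u i • m i = ∑ i, ∑ j, (a i j * u i) • y j := by
          refine Finset.sum_congr rfl fun i _ => ?_
          rw [hy i, Finset.smul_sum]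
          refine Finset.sum_congr rfl fun j _ => ?_
          rw [smul_smul, mul_comm]
      _ = ∑ j, (β u j) • y j := by
          rw [Finset.sum_comm]
          refine Finset.sum_congr rfl fun j _ => ?_
          rw [hβ, Finset.sum_smul]
  -- β is injective after tensoring with the residue field k
  have hβinj : Function.Injective (β.lTensor k) := by
    rw [injective_iff_map_eq_zero]
    intro z hz
    obtain ⟨lam, rfl⟩ := aux_exists_one_tmul (S := k) Ideal.Quotient.mk_surjective z
    rw [LinearMap.lTensor_tmul] at hz
    have hcoord : ∀ j, algebraMap A k (β lam j) = 0 :=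
      (aux_one_tmul_pi_eq_zero k (β lam)).mp hz
    have hker : LinearMap.baseChange k φ ((1 : k) ⊗ₜ[A] lam)
        = LinearMap.baseChange k φ (0 : k ⊗[A] (Fin n → A)) := by
      rw [map_zero, LinearMap.baseChange_tmul, hφβ lam, TensorProduct.tmul_sum]
      refine Finset.sum_eq_zero fun j _ => ?_
      rw [TensorProduct.tmul_smul, ← algebraMap_smul k (β lam j) ((1 : k) ⊗ₜ[A] y j),
        hcoord j, zero_smul]
    exact h hker
  -- β splits
  obtain ⟨l, hl⟩ :=
    (IsLocalRing.split_injective_iff_lTensor_residueField_injective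
      (R := A) (M := Fin n → A) (N := Fin κ → A) β).mpr hβinj
  -- the coordinates of `β v` lie in `p`
  have hw : ∀ j, β v j ∈ p := by
    intro j
    have h0 : algebraMap A K (β v j) = 0 := by
      rw [hβ, map_sum, ← ha j]
      refine Finset.sum_congr rfl fun i _ => ?_
      rw [map_mul]
      show _ = a i j • (algebraMap A K (v i))
      rw [Algebra.smul_def]
    rw [IsScalarTower.algebraMap_apply A R K] at h0
    have : algebraMap A R (β v j) ∈ IsLocalRing.maximalIdeal R :=
      (IsLocalRing.residue_eq_zero_iff _).mp h0
    rw [← Localization.AtPrime.comap_maximalIdeal (I := p)]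
    exact this
  -- conclude
  intro i
  have hvl : v = l (β v) := by
    rw [← LinearMap.comp_apply, hl, LinearMap.id_apply]
  rw [hvl]
  have : β v = ∑ j, (β v j) • (Pi.single j (1 : A) : Fin κ → A) := by
    conv_lhs => rw [← Finset.univ_sum_single (β v)]
    refine Finset.sum_congr rfl fun j _ => ?_
    rw [← Pi.single_smul, smul_eq_mul, mul_one]
  rw [this, map_sum, Finset.sum_apply]
  refine Ideal.sum_mem p fun j _ => ?_
  rw [map_smul, Pi.smul_apply, smul_eq_mul]
  exact p.mul_mem_right _ (hw j)
end

section
/- Let A be a commutative local ring, and let φ: A^n → A^m be an A-linear map such that the induced map k^n → k^m on the residue field k is injective. Then there exists an n×n minor of the matrix of φ which is a unit in A, and consequently for every ring homomorphism A → K to a field, the induced map K^n → K^m is injective. -/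
/-- Let `A` be a commutative local ring and `φ : A^n → A^m` a linear map
whose reduction modulo the maximal ideal `k^n → k^m` is injective.  Then some `n × n`
minor of the matrix of `φ` is a unit in `A`, and consequently for every ring
homomorphism `A → K` into a field, the induced map `K^n → K^m` is injective. -/
theorem stmt1 {A : Type} [CommRing A] [IsLocalRing A] {n m : ℕ}
    (φ : (Fin n → A) →ₗ[A] (Fin m → A))
    (h : Function.Injective
      (((LinearMap.toMatrix' φ).map (IsLocalRing.residue A)).mulVecLin)) :
    (∃ g : Fin n → Fin m, Function.Injective g ∧
        IsUnit (((LinearMap.toMatrix' φ).submatrix g id).det)) ∧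
      ∀ (K : Type) [Field K] (f : A →+* K),
        Function.Injective (((LinearMap.toMatrix' φ).map f).mulVecLin) := by
  classical
  set k := IsLocalRing.ResidueField A
  set M : Matrix (Fin m) (Fin n) A := LinearMap.toMatrix' φ with hM
  set Mb : Matrix (Fin m) (Fin n) k := M.map (IsLocalRing.residue A) with hMb
  -- rows of Mb span k^n
  have hrank : Mb.rank = n := by
    rw [Matrix.rank, LinearMap.finrank_range_of_inj h]
    simp
  have hspan : Submodule.span k (Set.range Mb) = ⊤ := by
    apply Submodule.eq_top_of_finrank_eq
    change Module.finrank k (Submodule.span k (Set.range Mb.row)) = _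
    rw [← Matrix.rank_eq_finrank_span_row, hrank]
    simp
  obtain ⟨t, hts, htspan, htli⟩ := exists_linearIndependent k (Set.range Mb)
  rw [hspan] at htspan
  haveI : Fintype t := ((Set.finite_range Mb).subset hts).fintype
  let b : Module.Basis t k (Fin n → k) := Module.Basis.mk htli
    (by rw [Subtype.range_val, htspan])
  let e : Fin n ≃ t := (b.indexEquiv (Pi.basisFun k (Fin n))).symm
  have hsel : ∀ i : Fin n, ∃ j : Fin m, Mb j = (e i : Fin n → k) := fun i =>
    hts (e i).2
  choose g hg using hsel
  have hginj : Function.Injective g := by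
    intro i j hij
    have : (e i : Fin n → k) = (e j : Fin n → k) := by rw [← hg, ← hg, hij]
    exact e.injective (Subtype.ext this)
  have hdetb : IsUnit (Mb.submatrix g id).det := by
    rw [← Matrix.isUnit_iff_isUnit_det, ← Matrix.linearIndependent_rows_iff_isUnit]
    have : (fun i => Mb.submatrix g id i) = (fun i : t => (i : Fin n → k)) ∘ e := by
      funext i
      ext j
      simp [Matrix.submatrix_apply, hg i]
    change LinearIndependent k (fun i => Mb.submatrix g id i)
    rw [this]
    exact htli.comp e e.injective
  have hmapdet : ∀ (K : Type) [CommRing K] (f : A →+* K),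
      ((M.map f).submatrix g id).det = f ((M.submatrix g id).det) := by
    intro K _ f
    rw [RingHom.map_det]
    congr 1
  have hdet : IsUnit ((M.submatrix g id).det) := by
    by_contra hu
    have : IsLocalRing.residue A ((M.submatrix g id).det) = 0 := by
      rw [IsLocalRing.residue]
      exact Ideal.Quotient.eq_zero_iff_mem.mpr hu
    rw [← hmapdet] at this
    have : (Mb.submatrix g id).det = 0 := by
      rw [hMb]; exact this
    rw [this] at hdetb
    exact hdetb.ne_zero rfl
  refine ⟨⟨g, hginj, hdet⟩, ?_⟩
  intro K _ f
  have hdetK : IsUnit (((M.map f).submatrix g id).det) := by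
    rw [hmapdet]
    exact hdet.map f
  rw [injective_iff_map_eq_zero]
  intro v hv
  have hsub : ((M.map f).submatrix g id).mulVec v = 0 := by
    funext i
    have := congrFun hv (g i)
    simpa [Matrix.mulVecLin_apply, Matrix.mulVec, dotProduct,
      Matrix.submatrix_apply] using this
  have hinj : Function.Injective (((M.map f).submatrix g id).mulVec) :=
    Matrix.mulVec_injective_iff_isUnit.mpr ((Matrix.isUnit_iff_isUnit_det _).mpr hdetK)
  exact hinj (a₁ := v) (a₂ := 0) (by simpa using hsub)
end

section
/- Let M be a fine monoid. Then the faces of M (submonoids F such that x + y ∈ F implies x, y ∈ F) are exactly the submonoids of units of the localizations M[-m] for m ∈ M; in particular M has only finitely many faces. -/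
/-- A face of a commutative monoid: a submonoid `F` such that `x + y ∈ F` implies
`x ∈ F` and `y ∈ F`. -/
def IsFace {M : Type} [AddCommMonoid M] (F : Set M) : Prop :=
  (0 : M) ∈ F ∧ (∀ x y : M, x ∈ F → y ∈ F → x + y ∈ F) ∧
    ∀ x y : M, x + y ∈ F → x ∈ F ∧ y ∈ F

/-- A face, viewed as an additive submonoid. -/
private def faceSubmonoid {M : Type} [AddCommMonoid M] {F : Set M} (hF : IsFace F) :
    AddSubmonoid M where
  carrier := F
  add_mem' := fun ha hb => hF.2.1 _ _ ha hb
  zero_mem' := hF.1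

private lemma face_mem_of_multiset {M : Type} [AddCommMonoid M] {F : Set M} (hF : IsFace F)
    {l : Multiset M} (h : l.sum ∈ F) : ∀ a ∈ l, a ∈ F := by
  induction l using Multiset.induction with
  | empty => simp
  | cons a l ih =>
    simp only [Multiset.sum_cons] at h
    obtain ⟨ha, hl⟩ := hF.2.2 _ _ h
    intro b hb
    rcases Multiset.mem_cons.1 hb with rfl | hb
    · exact ha
    · exact ih hl b hb

private lemma face_sum_mem {M : Type} [AddCommMonoid M] {F : Set M} (hF : IsFace F)
    {l : Multiset M} (h : ∀ a ∈ l, a ∈ F) : l.sum ∈ F := by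
  induction l using Multiset.induction with
  | empty => simpa using hF.1
  | cons a l ih =>
    simp only [Multiset.sum_cons]
    exact hF.2.1 _ _ (h a (Multiset.mem_cons_self a l))
      (ih fun b hb => h b (Multiset.mem_cons_of_mem hb))

/-- Let `M` be a fine monoid.  The faces of `M` are exactly the
submonoids of elements becoming units in the localizations `M[-m]` for `m ∈ M`
(an element `x` is a unit of `M[-m]` iff `x + y = k • m` for some `y ∈ M`, `k ∈ ℕ`);
in particular `M` has only finitely many faces. -/
theorem stmt5 {M : Type} [AddCancelCommMonoid M] [AddMonoid.FG M] :
    (∀ F : Set M, IsFace F ↔ ∃ m : M, F = {x : M | ∃ y : M, ∃ k : ℕ, x + y = k • m}) ∧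
      {F : Set M | IsFace F}.Finite := by
  classical
  obtain ⟨S, hS⟩ := (AddMonoid.fg_def.mp inferInstance : (⊤ : AddSubmonoid M).FG)
  have hmem : ∀ x : M, ∃ l : Multiset M, (∀ a ∈ l, a ∈ S) ∧ l.sum = x := by
    intro x
    have hx : x ∈ AddSubmonoid.closure (S : Set M) := by
      rw [hS]; exact AddSubmonoid.mem_top x
    simpa using AddSubmonoid.exists_multiset_of_mem_closure hx
  constructor
  · intro F
    constructor
    · intro hF
      set T := S.filter (· ∈ F) with hT
      refine ⟨∑ t ∈ T, t, ?_⟩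
      set m := ∑ t ∈ T, t with hm
      have hmF : m ∈ F :=
        AddSubmonoid.sum_mem (faceSubmonoid hF) fun t ht => (Finset.mem_filter.1 ht).2
      ext x
      constructor
      · intro hx
        obtain ⟨l, hl, hlx⟩ := hmem x
        have hlT : ∀ a ∈ l, a ∈ T := fun a ha =>
          Finset.mem_filter.2 ⟨hl a ha, face_mem_of_multiset hF (hlx ▸ hx) a ha⟩
        have key : ∀ l : Multiset M, (∀ a ∈ l, a ∈ T) → ∃ y : M, ∃ k : ℕ, l.sum + y = k • m := by
          intro l
          induction l using Multiset.induction with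
          | empty => exact fun _ => ⟨0, 0, by simp⟩
          | cons a l ih =>
            intro h
            obtain ⟨y, k, hy⟩ := ih fun b hb => h b (Multiset.mem_cons_of_mem hb)
            have ha : a ∈ T := h a (Multiset.mem_cons_self a l)
            refine ⟨∑ t ∈ T.erase a, t + y, k + 1, ?_⟩
            have he : a + ∑ t ∈ T.erase a, t = m := Finset.add_sum_erase T (fun t => t) ha
            simp only [Multiset.sum_cons]
            calc a + l.sum + (∑ t ∈ T.erase a, t + y)
                = (a + ∑ t ∈ T.erase a, t) + (l.sum + y) := by abel
              _ = m + k • m := by rw [he, hy]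
              _ = (k + 1) • m := by rw [succ_nsmul]; abel
        obtain ⟨y, k, hy⟩ := key l hlT
        exact ⟨y, k, by rw [hlx] at hy; exact hy⟩
      · rintro ⟨y, k, hxy⟩
        have : k • m ∈ F := AddSubmonoid.nsmul_mem (faceSubmonoid hF) hmF k
        exact (hF.2.2 x y (hxy ▸ this)).1
    · rintro ⟨m, rfl⟩
      refine ⟨⟨0, 0, by simp⟩, ?_, ?_⟩
      · rintro x x' ⟨y, k, hy⟩ ⟨y', k', hy'⟩
        exact ⟨y + y', k + k', by rw [add_smul, ← hy, ← hy']; abel⟩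
      · rintro x x' ⟨y, k, hy⟩
        exact ⟨⟨x' + y, k, by rw [← hy]; abel⟩, ⟨x + y, k, by rw [← hy]; abel⟩⟩
  · have subset_of_inter : ∀ F F' : Set M, IsFace F → IsFace F' →
        F ∩ (S : Set M) = F' ∩ (S : Set M) → F ⊆ F' := by
      intro F F' hF hF' h x hx
      obtain ⟨l, hl, hlx⟩ := hmem x
      have : ∀ a ∈ l, a ∈ F' := fun a ha => by
        have : a ∈ F ∩ (S : Set M) :=
          ⟨face_mem_of_multiset hF (hlx ▸ hx) a ha, hl a ha⟩
        exact (h ▸ this).1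
      exact hlx ▸ face_sum_mem hF' this
    have inj : Set.InjOn (fun F => F ∩ (S : Set M)) {F : Set M | IsFace F} := by
      intro F hF F' hF' h
      exact Set.Subset.antisymm (subset_of_inter F F' hF hF' h)
        (subset_of_inter F' F hF' hF h.symm)
    refine Set.Finite.of_finite_image (Set.Finite.subset
      (Set.Finite.finite_subsets S.finite_toSet) ?_) inj
    rintro A ⟨F, -, rfl⟩
    exact Set.inter_subset_right
end
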